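/- arXiv:2511.04424 — 2 statements merged into one kernel-verified Lean document; each statement's English description precedes it below -/
import Mathlib

section
/- With the corner-compression setup, suppose (q̃_c, q_s) ∈ ℂˡ × ℂ^{n_s} solves the compressed system D_cc·q̃_c + B_cs·q_s = f̃_c and B_sc·q̃_c + A_ss·q_s = f_s. Define q_c = A_cc⁻¹·U·D_cc·q̃_c + (A_cc⁻¹ − A_cc⁻¹·U·D_cc·V*·A_cc⁻¹)·f_c. Then (q_c, q_s) solves the original system A_cc·q_c + A_cs·q_s = f_c and A_sc·q_c + A_ss·q_s = f_s, and moreover V*·q_c = q̃_c. -/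
open Matrix

theorem corner_compression_recovery (nc ns l : ℕ)
    (Acc : Matrix (Fin nc) (Fin nc) ℂ) (hAcc : IsUnit Acc.det)
    (Ass : Matrix (Fin ns) (Fin ns) ℂ)
    (U : Matrix (Fin nc) (Fin l) ℂ) (Bcs : Matrix (Fin l) (Fin ns) ℂ)
    (Bsc : Matrix (Fin ns) (Fin l) ℂ) (Vst : Matrix (Fin l) (Fin nc) ℂ)
    (Acs : Matrix (Fin nc) (Fin ns) ℂ) (hAcs : Acs = U * Bcs)
    (Asc : Matrix (Fin ns) (Fin nc) ℂ) (hAsc : Asc = Bsc * Vst)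
    (hVAU : IsUnit (Vst * Acc⁻¹ * U).det)
    (Dcc : Matrix (Fin l) (Fin l) ℂ) (hDcc : Dcc = (Vst * Acc⁻¹ * U)⁻¹)
    (fc : Fin nc → ℂ) (fs : Fin ns → ℂ)
    (ftc : Fin l → ℂ) (hftc : ftc = Dcc.mulVec (Vst.mulVec (Acc⁻¹.mulVec fc)))
    (qtc : Fin l → ℂ) (qs : Fin ns → ℂ)
    (h1 : Dcc.mulVec qtc + Bcs.mulVec qs = ftc)
    (h2 : Bsc.mulVec qtc + Ass.mulVec qs = fs)
    (qc : Fin nc → ℂ)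
    (hqc : qc = (Acc⁻¹ * U * Dcc).mulVec qtc +
      (Acc⁻¹ - Acc⁻¹ * U * Dcc * Vst * Acc⁻¹).mulVec fc) :
    (Acc.mulVec qc + Acs.mulVec qs = fc ∧ Asc.mulVec qc + Ass.mulVec qs = fs) ∧
      Vst.mulVec qc = qtc := by
  have hA : Acc * Acc⁻¹ = 1 := mul_nonsing_inv _ hAcc
  have hMD : Vst * Acc⁻¹ * U * Dcc = 1 := by
    rw [hDcc]; exact mul_nonsing_inv _ hVAU
  have hVq : Vst.mulVec qc = qtc := by
    subst hqc
    simp only [mulVec_add, mulVec_mulVec, Matrix.mul_sub, ← Matrix.mul_assoc]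
    rw [hMD]
    simp [sub_self]
  refine ⟨⟨?_, ?_⟩, hVq⟩
  · have hBq : Bcs.mulVec qs = ftc - Dcc.mulVec qtc := by
      rw [← h1]; abel
    subst hqc hAcs hftc
    simp only [mulVec_add, mulVec_mulVec, Matrix.mul_sub, ← Matrix.mul_assoc]
    rw [hA, ← Matrix.mulVec_mulVec qs U Bcs, hBq]
    simp only [Matrix.one_mul, sub_mulVec, one_mulVec, mulVec_sub,
      mulVec_mulVec, ← Matrix.mul_assoc]
    abel
  · rw [hAsc, ← mulVec_mulVec, hVq, h2]
end

section
/- With the corner-compression setup, suppose (q_c, q_s) ∈ ℂ^{n_c} × ℂ^{n_s} solves the original system A_cc·q_c + A_cs·q_s = f_c and A_sc·q_c + A_ss·q_s = f_s. Then, setting q̃_c = V*·q_c, the pair (q̃_c, q_s) solves the compressed system D_cc·q̃_c + B_cs·q_s = f̃_c and B_sc·q̃_c + A_ss·q_s = f_s, and q_c is recovered by the formula q_c = A_cc⁻¹·U·D_cc·q̃_c + (A_cc⁻¹ − A_cc⁻¹·U·D_cc·V*·A_cc⁻¹)·f_c. -/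
open Matrix

theorem corner_compression_forward (nc ns l : ℕ)
    (Acc : Matrix (Fin nc) (Fin nc) ℂ) (hAcc : IsUnit Acc.det)
    (Ass : Matrix (Fin ns) (Fin ns) ℂ)
    (U : Matrix (Fin nc) (Fin l) ℂ) (Bcs : Matrix (Fin l) (Fin ns) ℂ)
    (Bsc : Matrix (Fin ns) (Fin l) ℂ) (Vst : Matrix (Fin l) (Fin nc) ℂ)
    (Acs : Matrix (Fin nc) (Fin ns) ℂ) (hAcs : Acs = U * Bcs)
    (Asc : Matrix (Fin ns) (Fin nc) ℂ) (hAsc : Asc = Bsc * Vst)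
    (hVAU : IsUnit (Vst * Acc⁻¹ * U).det)
    (Dcc : Matrix (Fin l) (Fin l) ℂ) (hDcc : Dcc = (Vst * Acc⁻¹ * U)⁻¹)
    (fc : Fin nc → ℂ) (fs : Fin ns → ℂ)
    (ftc : Fin l → ℂ) (hftc : ftc = Dcc.mulVec (Vst.mulVec (Acc⁻¹.mulVec fc)))
    (qc : Fin nc → ℂ) (qs : Fin ns → ℂ)
    (h1 : Acc.mulVec qc + Acs.mulVec qs = fc)
    (h2 : Asc.mulVec qc + Ass.mulVec qs = fs)
    (qtc : Fin l → ℂ) (hqtc : qtc = Vst.mulVec qc) :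
    (Dcc.mulVec qtc + Bcs.mulVec qs = ftc ∧ Bsc.mulVec qtc + Ass.mulVec qs = fs) ∧
      qc = (Acc⁻¹ * U * Dcc).mulVec qtc +
        (Acc⁻¹ - Acc⁻¹ * U * Dcc * Vst * Acc⁻¹).mulVec fc := by
  have hInv : Acc⁻¹ * Acc = 1 := Matrix.nonsing_inv_mul _ hAcc
  have hD : Dcc * (Vst * Acc⁻¹ * U) = 1 := by
    rw [hDcc]; exact Matrix.nonsing_inv_mul _ hVAU
  subst hAcs hAsc hftc hqtc
  subst h1 h2
  refine ⟨⟨?_, ?_⟩, ?_⟩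
  · simp only [Matrix.mulVec_add, Matrix.mulVec_mulVec, ← Matrix.mul_assoc]
    rw [Matrix.mul_assoc (Dcc * Vst) Acc⁻¹ Acc,
        Matrix.mul_assoc Dcc Vst (Acc⁻¹ * Acc), hInv, Matrix.mul_one,
        show Dcc * Vst * Acc⁻¹ * U = Dcc * (Vst * Acc⁻¹ * U) by
          simp [Matrix.mul_assoc],
        hD, Matrix.one_mul]
  · simp only [Matrix.mulVec_add, Matrix.mulVec_mulVec]
  · have e1 : Acc⁻¹ * U * Dcc * Vst * Acc⁻¹ * Acc = Acc⁻¹ * U * Dcc * Vst := by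
      rw [Matrix.mul_assoc (Acc⁻¹ * U * Dcc * Vst) Acc⁻¹ Acc, hInv, Matrix.mul_one]
    have e2 : Acc⁻¹ * U * Dcc * Vst * Acc⁻¹ * U = Acc⁻¹ * U := by
      calc Acc⁻¹ * U * Dcc * Vst * Acc⁻¹ * U
          = Acc⁻¹ * U * (Dcc * (Vst * Acc⁻¹ * U)) := by simp [Matrix.mul_assoc]
        _ = Acc⁻¹ * U := by rw [hD, Matrix.mul_one]
    simp only [Matrix.mulVec_add, Matrix.mulVec_mulVec, ← Matrix.mul_assoc,
      Matrix.sub_mul, e1, e2, hInv, sub_self, Matrix.zero_mul,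
      Matrix.zero_mulVec, Matrix.sub_mulVec, Matrix.one_mulVec]
    abel
end
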